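/- Suppose there exists S̄ ∈ (S*, S_in) such that p0·μ(S_in) < p0·μ(S̄) < b and μ'(S) ≤ 0 for all S ∈ [S̄, S_in], and set θ := b − p0·μ(S̄) > 0. Then for every locally Lipschitz function D : ℝ² → ℝ with D(x) ≥ 0 for all x ∈ ℝ², there exists an initial condition x0 ∈ ℝ² such that every continuously differentiable solution x = (x1,x2) : [0,∞) → ℝ² of the closed-loop system x1'(t) = b(g(x2(t))−1) + D*·g(x2(t))(1−e^{x1(t)}), x2'(t) = p(x2(t))(D(x(t)) − D*·g(x2(t))·e^{x1(t)}) with x(0) = x0 satisfies x1(t) ≤ x1(0) − θ·t for all t ≥ 0; in particular x1(t) → −∞ as t → ∞ and the solution is unbounded, so no such feedback achieves global asymptotic stabilization of the origin. -/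

import Mathlib

open Set Filter

/-- A function with nonpositive derivative on `[0,T]` is below its initial value. -/
lemma decay_aux {f f' : ℝ → ℝ} {T : ℝ}
    (hf : ∀ s ∈ Set.Icc (0:ℝ) T, HasDerivAt f (f' s) s)
    (hle : ∀ s ∈ Set.Icc (0:ℝ) T, f' s ≤ 0) :
    ∀ t ∈ Set.Icc (0:ℝ) T, f t ≤ f 0 := by
  intro t ht
  have hT : (0:ℝ) ≤ T := le_trans ht.1 ht.2
  have hanti : AntitoneOn f (Set.Icc 0 T) := by
    apply antitoneOn_of_deriv_nonpos (convex_Icc 0 T)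
    · exact fun s hs => (hf s hs).continuousAt.continuousWithinAt
    · intro s hs
      rw [interior_Icc] at hs
      exact ((hf s (Set.Ioo_subset_Icc_self hs)).differentiableAt).differentiableWithinAt
    · intro s hs
      rw [interior_Icc] at hs
      rw [(hf s (Set.Ioo_subset_Icc_self hs)).deriv]
      exact hle s (Set.Ioo_subset_Icc_self hs)
  exact hanti ⟨le_rfl, hT⟩ ht ht.1

/-- A function with nonnegative derivative on `[0,T]` is above its initial value. -/
lemma growth_aux {f f' : ℝ → ℝ} {T : ℝ}
    (hf : ∀ s ∈ Set.Icc (0:ℝ) T, HasDerivAt f (f' s) s)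
    (hle : ∀ s ∈ Set.Icc (0:ℝ) T, 0 ≤ f' s) :
    ∀ t ∈ Set.Icc (0:ℝ) T, f 0 ≤ f t := by
  have := decay_aux (f := fun s => -f s) (f' := fun s => -f' s)
    (fun s hs => (hf s hs).neg) (fun s hs => neg_nonpos.mpr (hle s hs))
  intro t ht
  have := this t ht
  simpa using this

/-- If there is S̄ ∈ (S*,S_in) with p0μ(S_in) < p0μ(S̄) < b and μ' ≤ 0
on [S̄,S_in], then no non-negative locally Lipschitz feedback achieves global
stabilization: for any such feedback there is an initial condition from which
x1(t) ≤ x1(0) − θt, so x1(t) → −∞ and the solution is unbounded. -/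
theorem stmt_8
    (S_in Sstar p0 b Dstar : ℝ) (μ : ℝ → ℝ)
    (hSin : 0 < S_in) (hSstar : Sstar ∈ Set.Ioo 0 S_in)
    (hp0 : 0 < p0) (hb : 0 ≤ b) (hDstar : 0 < Dstar)
    (hμ_bdd : BddAbove (Set.range μ))
    (hμ_C1 : ContDiffOn ℝ 1 μ (Set.Ici 0))
    (hμ_nonneg : ∀ S, 0 ≤ S → 0 ≤ μ S)
    (hμ_zero : μ 0 = 0) (hμ_pos : ∀ S, 0 < S → 0 < μ S)
    (heq : p0 * μ Sstar = b + Dstar)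
    (κ : ℝ) (hκ : κ = (S_in - Sstar) / Sstar)
    (p g : ℝ → ℝ)
    (hp : ∀ z, p z = κ * Real.exp (-z) + 1)
    (hg : ∀ z, g z = μ (S_in / p z) / μ Sstar)
    (Sbar : ℝ) (hSbar : Sbar ∈ Set.Ioo Sstar S_in)
    (h1 : p0 * μ S_in < p0 * μ Sbar) (h2 : p0 * μ Sbar < b)
    (h3 : ∀ S ∈ Set.Icc Sbar S_in, deriv μ S ≤ 0)
    (θ : ℝ) (hθ : θ = b - p0 * μ Sbar) :
    ∀ D : ℝ × ℝ → ℝ, LocallyLipschitz D → (∀ x, 0 ≤ D x) →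
      ∃ x0 : ℝ × ℝ, ∀ x : ℝ → ℝ × ℝ,
        (∀ t, 0 ≤ t → HasDerivAt x
          ((b * (g (x t).2 - 1) + Dstar * g (x t).2 * (1 - Real.exp (x t).1),
            p (x t).2 * (D (x t) - Dstar * g (x t).2 * Real.exp (x t).1)) : ℝ × ℝ) t) →
        x 0 = x0 →
        (∀ t, 0 ≤ t → (x t).1 ≤ x0.1 - θ * t) ∧
        Filter.Tendsto (fun t => (x t).1) Filter.atTop Filter.atBot := by
  intro D hDlip hDnn
  -- basic positivity facts
  have hSs0 : 0 < Sstar := hSstar.1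
  have hSsin : Sstar < S_in := hSstar.2
  have hμs : 0 < μ Sstar := hμ_pos _ hSs0
  have hκpos : 0 < κ := by rw [hκ]; exact div_pos (by linarith) hSs0
  have hSb1 : Sstar < Sbar := hSbar.1
  have hSb2 : Sbar < S_in := hSbar.2
  have hSbpos : 0 < Sbar := lt_trans hSs0 hSb1
  have hθpos : 0 < θ := by rw [hθ]; linarith
  -- μ is antitone on [Sbar, S_in]
  have hmono : AntitoneOn μ (Set.Icc Sbar S_in) := by
    apply antitoneOn_of_deriv_nonpos (convex_Icc _ _)
    · exact hμ_C1.continuousOn.mono (fun s hs => le_trans hSbpos.le hs.1)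
    · intro s hs
      rw [interior_Icc] at hs
      have hs0 : 0 < s := lt_trans hSbpos hs.1
      exact ((hμ_C1.contDiffAt (Ici_mem_nhds hs0)).differentiableAt
        one_ne_zero).differentiableWithinAt
    · intro s hs
      rw [interior_Icc] at hs
      exact h3 s (Set.Ioo_subset_Icc_self hs)
  -- global bound on μ
  obtain ⟨Mμ, hMμ⟩ := hμ_bdd
  have hMb : ∀ S, μ S ≤ Mμ := fun S => hMμ ⟨S, rfl⟩
  have hMμpos : 0 < Mμ := lt_of_lt_of_le hμs (hMb Sstar)
  -- constants
  set zbar : ℝ := Real.log (κ * Sbar / (S_in - Sbar)) with hzbar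
  set Pmax : ℝ := S_in / Sbar with hPmax
  have hPmaxpos : 0 < Pmax := by positivity
  set Mg : ℝ := Mμ / μ Sstar with hMg
  have hMgpos : 0 < Mg := by positivity
  set C : ℝ := Pmax * Dstar * Mg with hC
  have hCpos : 0 < C := by positivity
  set a : ℝ := Real.log (θ / (2 * C)) with ha
  have hea : Real.exp a = θ / (2 * C) := Real.exp_log (by positivity)
  have hCea : C * Real.exp a = θ / 2 := by
    rw [hea]; field_simp
  -- basic facts about p and g
  have hp_gt1 : ∀ z, 1 < p z := by
    intro z; rw [hp]; nlinarith [Real.exp_pos (-z)]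
  have hp_pos : ∀ z, 0 < p z := fun z => lt_trans one_pos (hp_gt1 z)
  have hS_pos : ∀ z, 0 < S_in / p z := fun z => div_pos hSin (hp_pos z)
  have hS_le : ∀ z, S_in / p z ≤ S_in := fun z => div_le_self hSin.le (hp_gt1 z).le
  have hg_nonneg : ∀ z, 0 ≤ g z := by
    intro z; rw [hg]
    exact div_nonneg (hμ_nonneg _ (hS_pos z).le) hμs.le
  have hg_le : ∀ z, g z ≤ Mg := by
    intro z; rw [hg, hMg]
    gcongr
    exact hMb _
  -- facts for z ≥ zbar
  have hzarg : 0 < κ * Sbar / (S_in - Sbar) := by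
    have : 0 < S_in - Sbar := by linarith
    positivity
  have hp_le : ∀ z, zbar ≤ z → p z ≤ Pmax := by
    intro z hz
    have h1' : Real.exp (-z) ≤ Real.exp (-zbar) := Real.exp_le_exp.mpr (by linarith)
    have h2' : Real.exp (-zbar) = (S_in - Sbar) / (κ * Sbar) := by
      rw [Real.exp_neg, hzbar, Real.exp_log hzarg, inv_div]
    rw [hp, hPmax]
    have hSinSb : 0 < S_in - Sbar := by linarith
    have : κ * Real.exp (-z) ≤ (S_in - Sbar) / Sbar := by
      calc κ * Real.exp (-z) ≤ κ * ((S_in - Sbar) / (κ * Sbar)) := by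
              rw [← h2']; exact mul_le_mul_of_nonneg_left h1' hκpos.le
        _ = (S_in - Sbar) / Sbar := by field_simp
    have hfs : (S_in - Sbar) / Sbar + 1 = S_in / Sbar := by field_simp; ring
    linarith
  have hSbar_le : ∀ z, zbar ≤ z → Sbar ≤ S_in / p z := by
    intro z hz
    rw [le_div_iff₀ (hp_pos z)]
    have := hp_le z hz
    calc Sbar * p z ≤ Sbar * Pmax := mul_le_mul_of_nonneg_left this hSbpos.le
      _ = S_in := by rw [hPmax]; field_simp
  have hμle : ∀ z, zbar ≤ z → μ (S_in / p z) ≤ μ Sbar :=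
    fun z hz => hmono ⟨le_rfl, hSb2.le⟩ ⟨hSbar_le z hz, hS_le z⟩ (hSbar_le z hz)
  -- key estimate on the x1-equation
  have key1 : ∀ z w : ℝ, zbar ≤ z →
      b * (g z - 1) + Dstar * g z * (1 - Real.exp w) ≤ -θ := by
    intro z w hz
    have hbg : (b + Dstar) * g z = p0 * μ (S_in / p z) := by
      rw [hg, ← heq]; field_simp
    have h4 : p0 * μ (S_in / p z) ≤ p0 * μ Sbar :=
      mul_le_mul_of_nonneg_left (hμle z hz) hp0.le
    have h5 : 0 ≤ Dstar * g z * Real.exp w := by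
      have := hg_nonneg z; positivity
    have : b * (g z - 1) + Dstar * g z * (1 - Real.exp w)
        = (b + Dstar) * g z - b - Dstar * g z * Real.exp w := by ring
    rw [this, hbg, hθ]; linarith
  -- key estimate on the x2-equation
  have key2 : ∀ z w y : ℝ, zbar ≤ z → 0 ≤ y →
      -(C * Real.exp w) ≤ p z * (y - Dstar * g z * Real.exp w) := by
    intro z w y hz hy
    have h5 : p z * (Dstar * g z * Real.exp w) ≤ C * Real.exp w := by
      have hA : p z * (Dstar * g z) ≤ Pmax * (Dstar * Mg) := by
        apply mul_le_mul (hp_le z hz)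
          (mul_le_mul_of_nonneg_left (hg_le z) hDstar.le)
          (by have := hg_nonneg z; positivity) hPmaxpos.le
      calc p z * (Dstar * g z * Real.exp w)
          = (p z * (Dstar * g z)) * Real.exp w := by ring
        _ ≤ (Pmax * (Dstar * Mg)) * Real.exp w :=
            mul_le_mul_of_nonneg_right hA (Real.exp_pos w).le
        _ = C * Real.exp w := by rw [hC]; ring
    have h6 : 0 ≤ p z * y := mul_nonneg (hp_pos z).le hy
    nlinarith [hp_pos z]
  -- the initial condition
  refine ⟨(a, zbar + 1), ?_⟩
  intro x hx hx0
  have hx10 : (x 0).1 = a := by rw [hx0]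
  have hx20 : (x 0).2 = zbar + 1 := by rw [hx0]
  -- claim 1 : as long as x2 ≥ zbar on [0,T], x1(t) ≤ a - θ t on [0,T]
  have claim1 : ∀ T, 0 ≤ T → (∀ s ∈ Set.Icc (0:ℝ) T, zbar ≤ (x s).2) →
      ∀ t ∈ Set.Icc (0:ℝ) T, (x t).1 ≤ a - θ * t := by
    intro T hT hH t ht
    have hder : ∀ s ∈ Set.Icc (0:ℝ) T,
        HasDerivAt (fun s => (x s).1 + θ * s)
          ((b * (g (x s).2 - 1) + Dstar * g (x s).2 * (1 - Real.exp (x s).1)) + θ) s := by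
      intro s hs
      have h1' : HasDerivAt (fun s => (x s).1)
          (b * (g (x s).2 - 1) + Dstar * g (x s).2 * (1 - Real.exp (x s).1)) s :=
        (hx s hs.1).fst
      have h2' : HasDerivAt (fun s : ℝ => θ * s) θ s := by
        simpa using (hasDerivAt_id s).const_mul θ
      exact h1'.add h2'
    have hneg : ∀ s ∈ Set.Icc (0:ℝ) T,
        (b * (g (x s).2 - 1) + Dstar * g (x s).2 * (1 - Real.exp (x s).1)) + θ ≤ 0 := by
      intro s hs
      have := key1 (x s).2 (x s).1 (hH s hs)
      linarith
    have := decay_aux hder hneg t ht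
    simp only [mul_zero, add_zero, hx10] at this
    linarith
  -- claim 2 : as long as x2 ≥ zbar on [0,T], x2(T) ≥ zbar + 1/2
  have claim2 : ∀ T, 0 ≤ T → (∀ s ∈ Set.Icc (0:ℝ) T, zbar ≤ (x s).2) →
      zbar + 1/2 ≤ (x T).2 := by
    intro T hT hH
    have hx1le := claim1 T hT hH
    have hder : ∀ s ∈ Set.Icc (0:ℝ) T,
        HasDerivAt (fun s => (x s).2 - 1/2 * Real.exp (-(θ * s)))
          ((p (x s).2 * (D (x s) - Dstar * g (x s).2 * Real.exp (x s).1))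
            - 1/2 * (Real.exp (-(θ * s)) * (-θ))) s := by
      intro s hs
      have h1' : HasDerivAt (fun s => (x s).2)
          (p (x s).2 * (D (x s) - Dstar * g (x s).2 * Real.exp (x s).1)) s :=
        (hx s hs.1).snd
      have hin : HasDerivAt (fun s : ℝ => -(θ * s)) (-θ) s := by
        have h := ((hasDerivAt_id s).const_mul θ).neg; simp only [id_eq, mul_one] at h; exact h
      have h2' : HasDerivAt (fun s : ℝ => Real.exp (-(θ * s)))
          (Real.exp (-(θ * s)) * (-θ)) s := hin.exp
      exact h1'.sub (h2'.const_mul (1/2))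
    have hpos : ∀ s ∈ Set.Icc (0:ℝ) T,
        0 ≤ (p (x s).2 * (D (x s) - Dstar * g (x s).2 * Real.exp (x s).1))
            - 1/2 * (Real.exp (-(θ * s)) * (-θ)) := by
      intro s hs
      have hk2 := key2 (x s).2 (x s).1 (D (x s)) (hH s hs) (hDnn (x s))
      have hw : (x s).1 ≤ a - θ * s := hx1le s hs
      have hexp : Real.exp (x s).1 ≤ Real.exp a * Real.exp (-(θ * s)) := by
        rw [← Real.exp_add]
        exact Real.exp_le_exp.mpr (by linarith)
      have hCe : C * Real.exp (x s).1 ≤ θ / 2 * Real.exp (-(θ * s)) := by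
        calc C * Real.exp (x s).1 ≤ C * (Real.exp a * Real.exp (-(θ * s))) :=
              mul_le_mul_of_nonneg_left hexp hCpos.le
          _ = (C * Real.exp a) * Real.exp (-(θ * s)) := by ring
          _ = θ / 2 * Real.exp (-(θ * s)) := by rw [hCea]
      linarith
    have := growth_aux hder hpos T ⟨hT, le_rfl⟩
    simp only [mul_zero, neg_zero, Real.exp_zero, mul_one, hx20] at this
    have hE : 0 ≤ Real.exp (-(θ * T)) := (Real.exp_pos _).le
    linarith
  -- continuity of x2 on [0,∞)
  have hxcont : ∀ t, 0 ≤ t → ContinuousAt (fun s => (x s).2) t :=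
    fun t ht => (continuous_snd.continuousAt).comp (hx t ht).continuousAt
  -- claim 3 : x2 stays above zbar forever
  have claim3 : ∀ t, 0 ≤ t → zbar < (x t).2 := by
    by_contra hcon
    push_neg at hcon
    obtain ⟨t0, ht0, hle0⟩ := hcon
    set B : Set ℝ := {t | 0 ≤ t ∧ (x t).2 ≤ zbar} with hB
    have hBne : B.Nonempty := ⟨t0, ht0, hle0⟩
    have hBbdd : BddBelow B := ⟨0, fun b hb => hb.1⟩
    set τ : ℝ := sInf B with hτ
    have hτ0 : 0 ≤ τ := le_csInf hBne (fun b hb => hb.1)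
    -- x2 τ ≤ zbar
    have hτle : (x τ).2 ≤ zbar := by
      by_contra h
      push_neg at h
      have hten : Filter.Tendsto (fun s => (x s).2) (nhds τ) (nhds ((x τ).2)) :=
        hxcont τ hτ0
      have hev : {s : ℝ | zbar < (x s).2} ∈ nhds τ := hten (lt_mem_nhds h)
      obtain ⟨ε, hε, hball⟩ := Metric.mem_nhds_iff.mp hev
      have hlb : τ + ε / 2 ≤ τ := by
        rw [hτ]
        apply le_csInf hBne
        intro bb hbb
        by_contra hbb'
        push_neg at hbb'
        have hτbb : τ ≤ bb := csInf_le hBbdd hbb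
        have : bb ∈ Metric.ball τ ε := by
          rw [Metric.mem_ball, Real.dist_eq, abs_of_nonneg (by linarith)]
          linarith
        exact absurd (hball this) (not_lt.mpr hbb.2)
      linarith
    have hτpos : 0 < τ := by
      rcases lt_or_eq_of_le hτ0 with h | h
      · exact h
      · exfalso; rw [← h] at hτle; rw [hx20] at hτle; linarith
    -- strictly before τ, x2 > zbar
    have hbefore : ∀ s, 0 ≤ s → s < τ → zbar < (x s).2 := by
      intro s hs hsτ
      by_contra h
      push_neg at h
      have : τ ≤ s := csInf_le hBbdd ⟨hs, h⟩
      linarith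
    -- hence before τ, x2 ≥ zbar + 1/2
    have hhalf : ∀ s ∈ Set.Ico (0:ℝ) τ, zbar + 1/2 ≤ (x s).2 := by
      intro s hs
      exact claim2 s hs.1 (fun σ hσ =>
        (hbefore σ hσ.1 (lt_of_le_of_lt hσ.2 hs.2)).le)
    -- pass to the limit s → τ⁻
    have hten : Filter.Tendsto (fun s => (x s).2) (nhdsWithin τ (Set.Iio τ))
        (nhds ((x τ).2)) := (hxcont τ hτ0).continuousWithinAt
    have hevlim : ∀ᶠ s in nhdsWithin τ (Set.Iio τ), zbar + 1/2 ≤ (x s).2 := by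
      have hmem : Set.Ioo 0 τ ∈ nhdsWithin τ (Set.Iio τ) :=
        Ioo_mem_nhdsLT_of_mem ⟨hτpos, le_rfl⟩
      filter_upwards [hmem] with s hs
      exact hhalf s ⟨hs.1.le, hs.2⟩
    have := ge_of_tendsto hten hevlim
    linarith
  -- conclusion
  have hmain : ∀ t, 0 ≤ t → (x t).1 ≤ a - θ * t := by
    intro t ht
    exact claim1 t ht (fun s hs => (claim3 s hs.1).le) t ⟨ht, le_rfl⟩
  constructor
  · intro t ht
    simpa using hmain t ht
  · refine tendsto_atBot_mono' atTop ?_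
      (tendsto_atBot_add_const_left atTop a
        (tendsto_neg_atBot_iff.mpr (tendsto_id.const_mul_atTop hθpos)))
    filter_upwards [eventually_ge_atTop (0:ℝ)] with t ht
    exact hmain t ht
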